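/- Let x be a sorted list of real numbers, l an index of x, and b a real number with b ≤ x_l. Then the sorted rearrangement of the list obtained from x by replacing its l-th entry with b is componentwise dominated by x. -/

import Mathlib

open List

private lemma lemL {c b : ℝ} {s t : List ℝ} (hs : (c :: s).Pairwise (· ≤ ·))
    (hst : List.Forall₂ (· ≤ ·) s t) (hcb : c ≤ b) :
    List.Forall₂ (· ≤ ·) (c :: s) (List.orderedInsert (· ≤ ·) b t) := by
  induction hst generalizing c with
  | nil => simp [List.orderedInsert, hcb]
  | @cons f e s' t' hfe hst' ih =>
    rcases List.pairwise_cons.mp hs with ⟨hcall, hs'⟩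
    by_cases hbe : b ≤ e
    · simp only [List.orderedInsert, if_pos hbe]
      exact List.Forall₂.cons hcb (List.Forall₂.cons hfe hst')
    · simp only [List.orderedInsert, if_neg hbe]
      refine List.Forall₂.cons (le_trans (hcall f (by simp)) hfe) ?_
      exact ih hs' (le_trans hfe (le_of_not_ge hbe))

private lemma lemL' {a d : ℝ} {s t : List ℝ} (ht : (d :: t).Pairwise (· ≤ ·))
    (hst : List.Forall₂ (· ≤ ·) s t) (had : a ≤ d) :
    List.Forall₂ (· ≤ ·) (List.orderedInsert (· ≤ ·) a s) (d :: t) := by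
  induction hst generalizing d with
  | nil => simp [List.orderedInsert, had]
  | @cons f e s' t' hfe hst' ih =>
    rcases List.pairwise_cons.mp ht with ⟨hdall, ht'⟩
    by_cases haf : a ≤ f
    · simp only [List.orderedInsert, if_pos haf]
      exact List.Forall₂.cons had (List.Forall₂.cons hfe hst')
    · simp only [List.orderedInsert, if_neg haf]
      refine List.Forall₂.cons (le_trans (le_of_lt (lt_of_not_ge haf)) had) ?_
      exact ih ht' (le_trans had (hdall e (by simp)))

private lemma lemM {a b : ℝ} {s t : List ℝ} (hab : a ≤ b)
    (hs : s.Pairwise (· ≤ ·)) (ht : t.Pairwise (· ≤ ·))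
    (hst : List.Forall₂ (· ≤ ·) s t) :
    List.Forall₂ (· ≤ ·) (List.orderedInsert (· ≤ ·) a s)
      (List.orderedInsert (· ≤ ·) b t) := by
  induction hst generalizing a b with
  | nil => simpa [List.orderedInsert] using hab
  | @cons c d s' t' hcd hst' ih =>
    rcases List.pairwise_cons.mp hs with ⟨hcall, hs'⟩
    rcases List.pairwise_cons.mp ht with ⟨hdall, ht'⟩
    by_cases hac : a ≤ c <;> by_cases hbd : b ≤ d
    · simp only [List.orderedInsert, if_pos hac, if_pos hbd]
      exact List.Forall₂.cons hab (List.Forall₂.cons hcd hst')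
    · simp only [List.orderedInsert, if_pos hac, if_neg hbd]
      refine List.Forall₂.cons (le_trans hac hcd) ?_
      exact lemL hs hst' (le_trans hcd (le_of_not_ge hbd))
    · simp only [List.orderedInsert, if_neg hac, if_pos hbd]
      have hca : c ≤ a := le_of_not_ge hac
      exact List.Forall₂.cons (hca.trans hab)
        (lemL' ht hst' (hab.trans hbd))
    · simp only [List.orderedInsert, if_neg hac, if_neg hbd]
      exact List.Forall₂.cons hcd (ih hab hs' ht')

private lemma lemT {s t : List ℝ} (hst : List.Forall₂ (· ≤ ·) s t) :
    List.Forall₂ (· ≤ ·) (List.insertionSort (· ≤ ·) s)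
      (List.insertionSort (· ≤ ·) t) := by
  induction hst with
  | nil => simp
  | @cons a b s' t' hab hst' ih =>
    exact lemM hab (List.pairwise_insertionSort _ _) (List.pairwise_insertionSort _ _) ih

/-- replacing the `l`-th entry of a sorted list `x` by some `b ≤ x_l`
and re-sorting yields a list componentwise dominated by `x`. -/
theorem stmt8 (x : List ℝ) (hx : x.Pairwise (· ≤ ·)) (l : ℕ) (hl : l < x.length)
    (b : ℝ) (hb : b ≤ x.get ⟨l, hl⟩) :
    List.Forall₂ (· ≤ ·) (List.insertionSort (· ≤ ·) (x.set l b)) x := by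
  have hset : List.Forall₂ (· ≤ ·) (x.set l b) x := by
    rw [List.forall₂_iff_get]
    refine ⟨by simp, fun i h1 h2 => ?_⟩
    rw [List.get_eq_getElem, List.getElem_set]
    split
    · next heq => subst heq; exact hb
    · exact le_refl _
  have := lemT hset
  rwa [List.Pairwise.insertionSort_eq hx] at this
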